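/- arXiv:2308.06988 — 5 statements merged into one kernel-verified Lean document; each statement's English description precedes it below -/
import Mathlib

section
/- For all real β > 0, κ > 0 and angles θᵢ, θⱼ with cos θᵢ cos θⱼ ≥ 0 and sin θᵢ sin θⱼ ≥ 0, one has exp(-4βκ sin θᵢ sin θⱼ) + exp(-4βκ cos θᵢ cos θⱼ) ≥ exp(-2βκ cos(θᵢ-θⱼ)) · (1 + exp(-2βκ cos(θᵢ-θⱼ))). -/
/-- Key edge-probability inequality `p_e^τ ≥ p_e^σ` for the critical U(1)×ℤ₂
cluster representation. -/
theorem stmt1 (β κ θi θj : ℝ) (hβ : 0 < β) (hκ : 0 < κ)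
    (hX : 0 ≤ Real.cos θi * Real.cos θj) (hY : 0 ≤ Real.sin θi * Real.sin θj) :
    Real.exp (-(4 * β * κ * (Real.sin θi * Real.sin θj)))
      + Real.exp (-(4 * β * κ * (Real.cos θi * Real.cos θj)))
      ≥ Real.exp (-(2 * β * κ * Real.cos (θi - θj)))
        * (1 + Real.exp (-(2 * β * κ * Real.cos (θi - θj)))) := by
  set X := Real.cos θi * Real.cos θj with hXdef
  set Y := Real.sin θi * Real.sin θj with hYdef
  have hcos : Real.cos (θi - θj) = X + Y := by rw [Real.cos_sub]
  set a := Real.exp (-(2 * β * κ * Y)) with ha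
  set b := Real.exp (-(2 * β * κ * X)) with hb
  have h1 : Real.exp (-(4 * β * κ * Y)) = a ^ 2 := by
    rw [ha, ← Real.exp_nat_mul]; ring_nf
  have h2 : Real.exp (-(4 * β * κ * X)) = b ^ 2 := by
    rw [hb, ← Real.exp_nat_mul]; ring_nf
  have h3 : Real.exp (-(2 * β * κ * Real.cos (θi - θj))) = a * b := by
    rw [ha, hb, ← Real.exp_add, hcos]; ring_nf
  have hab : a * b ≤ 1 := by
    rw [← h3]
    apply Real.exp_le_one_iff.mpr
    have h0 : 0 ≤ Real.cos (θi - θj) := by rw [hcos]; linarith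
    have := mul_nonneg (by positivity : (0:ℝ) ≤ 2 * β * κ) h0
    linarith
  have hapos : 0 < a := Real.exp_pos _
  have hbpos : 0 < b := Real.exp_pos _
  rw [h1, h2, h3]
  nlinarith [sq_nonneg (a - b), mul_pos hapos hbpos]
end

section
/- Let w, w^ξ, w^η, w^{ξη} be positive reals with the property that w^{ξη} < w^ξ ⟺ w^η < w. Define F(w, w^ξ, w^η, w^{ξη}) = (w - w^η)·1{w^η < w < w^ξ} + (w^ξ - w^{ξη})·1{w^ξ < w and w^η < w}. Then F is invariant under the swap (w, w^ξ, w^η, w^{ξη}) ↦ (w^ξ, w, w^{ξη}, w^η). -/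
open scoped Classical

/-- Invariance of the quantity w(p^η - p^σ) under the spin-flip swap
(w, w^ξ, w^η, w^{ξη}) ↦ (w^ξ, w, w^{ξη}, w^η). -/
theorem stmt9 (w wξ wη wξη : ℝ) (hw : 0 < w) (h1 : 0 < wξ) (h2 : 0 < wη)
    (h3 : 0 < wξη) (hiff : wξη < wξ ↔ wη < w) :
    let F : ℝ → ℝ → ℝ → ℝ → ℝ := fun a aξ aη aξη =>
      (a - aη) * (if aη < a ∧ a < aξ then 1 else 0)
        + (aξ - aξη) * (if aξ < a ∧ aη < a then 1 else 0)
    F w wξ wη wξη = F wξ w wξη wη := by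
  intro F
  simp only [F]
  by_cases h : wη < w
  · have h' := hiff.mpr h
    rcases lt_trichotomy w wξ with hc | hc | hc
    · rw [if_pos ⟨h, hc⟩, if_neg (fun hh => absurd hh.1 (not_lt.mpr hc.le)),
        if_neg (fun hh => absurd hh.2 (not_lt.mpr hc.le)), if_pos ⟨hc, h'⟩]
      ring
    · subst hc
      simp
    · rw [if_neg (fun hh => absurd hh.2 (not_lt.mpr hc.le)), if_pos ⟨hc, h⟩,
        if_pos ⟨h', hc⟩, if_neg (fun hh => absurd hh.1 (not_lt.mpr hc.le))]
      ring
  · have h' : ¬ wξη < wξ := fun hh => h (hiff.mp hh)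
    rw [if_neg (fun hh => h hh.1), if_neg (fun hh => h hh.2),
      if_neg (fun hh => h' hh.1), if_neg (fun hh => h' hh.2)]
    ring
end

section
/- Consider the Hamiltonian H(σ,τ) = -Σ_{e=ij} κ_e (ρ₊ + ρ₋ τᵢτⱼ) σᵢσⱼ on a finite graph G, where σᵢ, τᵢ ∈ {-1,+1}, ρ ∈ [0,1], ρ± = 1 ± ρ, and κ_e ≥ 0. Then the partition function factorizes as Z = Z^{Is}_{βρ₊} · Z^{Is}_{βρ₋}, where Z^{Is}_{β'} is the partition function of the Ising model on G with couplings κ_e at inverse temperature β'. Moreover ⟨σ₀σ_R⟩ = ⟨s₀s_R⟩^{Is}_{βρ₊} and ⟨τ₀τ_R⟩ = ⟨s₀s_R⟩^{Is}_{βρ₊} · ⟨s₀s_R⟩^{Is}_{βρ₋}. -/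
noncomputable section

/-- Ising spin value of a Boolean configuration entry. -/
def spin (b : Bool) : ℝ := if b then 1 else -1

variable {V E : Type*}

/-- Partition function of the Ising model with couplings κ at inverse temperature β. -/
def isingZ [Fintype V] [DecidableEq V] [Fintype E]
    (s t : E → V) (κ : E → ℝ) (β : ℝ) : ℝ :=
  ∑ τ : V → Bool, Real.exp (β * ∑ e, κ e * spin (τ (s e)) * spin (τ (t e)))

/-- Spin-spin correlation of the Ising model. -/
def isingCorr [Fintype V] [DecidableEq V] [Fintype E]
    (s t : E → V) (κ : E → ℝ) (β : ℝ) (a b : V) : ℝ :=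
  (∑ τ : V → Bool, spin (τ a) * spin (τ b) *
      Real.exp (β * ∑ e, κ e * spin (τ (s e)) * spin (τ (t e)))) / isingZ s t κ β

/-- Hamiltonian H(σ,τ) = -Σ_e κ_e (ρ₊ + ρ₋ τᵢτⱼ) σᵢσⱼ. -/
def H14 [Fintype E] (s t : E → V) (κ : E → ℝ) (ρ : ℝ) (σ τ : V → Bool) : ℝ :=
  -∑ e, κ e * ((1 + ρ) + (1 - ρ) * spin (τ (s e)) * spin (τ (t e)))
      * spin (σ (s e)) * spin (σ (t e))

/-- Partition function of the coupled ℤ₂×ℤ₂ model. -/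
def Z14 [Fintype V] [DecidableEq V] [Fintype E]
    (s t : E → V) (κ : E → ℝ) (ρ β : ℝ) : ℝ :=
  ∑ στ : (V → Bool) × (V → Bool), Real.exp (-(β * H14 s t κ ρ στ.1 στ.2))


/-- Pointwise product of spin configurations (ℤ₂ product via `==`). -/
def mulConf (σ τ : V → Bool) : V → Bool := fun v => τ v == σ v

lemma spin_beq (x y : Bool) : spin (x == y) = spin x * spin y := by
  cases x <;> cases y <;> norm_num [spin]

lemma mulConf_invol (σ τ : V → Bool) : mulConf σ (mulConf σ τ) = τ := by
  funext v; simp only [mulConf]; cases σ v <;> cases τ v <;> rfl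

lemma spin_mulConf_cancel (σ τ : V → Bool) (v : V) :
    spin (σ v) * spin (mulConf σ τ v) = spin (τ v) := by
  simp only [mulConf]; cases σ v <;> cases τ v <;> norm_num [spin]

lemma key14 [Fintype E] (s t : E → V) (κ : E → ℝ) (ρ β : ℝ) (σ τ : V → Bool) :
    Real.exp (-(β * H14 s t κ ρ σ τ)) =
      Real.exp ((β * (1 + ρ)) * ∑ e, κ e * spin (σ (s e)) * spin (σ (t e))) *
      Real.exp ((β * (1 - ρ)) * ∑ e,
        κ e * spin (mulConf σ τ (s e)) * spin (mulConf σ τ (t e))) := by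
  rw [← Real.exp_add]
  congr 1
  have h : ∀ (c d : ℝ) (f g : E → ℝ),
      c * ∑ e, f e + d * ∑ e, g e = ∑ e, (c * f e + d * g e) := by
    intro c d f g; rw [Finset.mul_sum, Finset.mul_sum, ← Finset.sum_add_distrib]
  rw [h, H14, mul_neg, neg_neg, Finset.mul_sum]
  refine Finset.sum_congr rfl fun e _ => ?_
  simp only [mulConf, spin_beq]
  ring

lemma sum_factor14 [Fintype V] [DecidableEq V] (F G : (V → Bool) → ℝ) :
    ∑ p : (V → Bool) × (V → Bool), F p.1 * G (mulConf p.1 p.2)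
      = (∑ σ : V → Bool, F σ) * (∑ τ : V → Bool, G τ) := by
  rw [Fintype.sum_prod_type, Finset.sum_mul]
  refine Finset.sum_congr rfl fun σ _ => ?_
  dsimp only
  rw [← Finset.mul_sum]
  congr 1
  exact Equiv.sum_comp (Function.Involutive.toPerm _ (mulConf_invol σ)) G

lemma isingZ_pos [Fintype V] [DecidableEq V] [Fintype E]
    (s t : E → V) (κ : E → ℝ) (β : ℝ) : 0 < isingZ s t κ β :=
  Finset.sum_pos (fun _ _ => Real.exp_pos _) Finset.univ_nonempty

/-- The ℤ₂×ℤ₂ model decouples into two Ising models at inverse temperatures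
βρ₊ and βρ₋; partition function and correlations factorize. -/
theorem stmt14 [Fintype V] [DecidableEq V] [Fintype E]
    (s t : E → V) (κ : E → ℝ) (hκ : ∀ e, 0 ≤ κ e)
    (ρ β : ℝ) (hρ0 : 0 ≤ ρ) (hρ1 : ρ ≤ 1) (a b : V) :
    Z14 s t κ ρ β = isingZ s t κ (β * (1 + ρ)) * isingZ s t κ (β * (1 - ρ)) ∧
    (∑ στ : (V → Bool) × (V → Bool), spin (στ.1 a) * spin (στ.1 b) *
        Real.exp (-(β * H14 s t κ ρ στ.1 στ.2))) / Z14 s t κ ρ β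
      = isingCorr s t κ (β * (1 + ρ)) a b ∧
    (∑ στ : (V → Bool) × (V → Bool), spin (στ.2 a) * spin (στ.2 b) *
        Real.exp (-(β * H14 s t κ ρ στ.1 στ.2))) / Z14 s t κ ρ β
      = isingCorr s t κ (β * (1 + ρ)) a b * isingCorr s t κ (β * (1 - ρ)) a b := by
  have hZp := isingZ_pos s t κ (β * (1 + ρ)) (V := V) (E := E)
  have hZm := isingZ_pos s t κ (β * (1 - ρ)) (V := V) (E := E)
  have hZ : Z14 s t κ ρ β = isingZ s t κ (β * (1 + ρ)) * isingZ s t κ (β * (1 - ρ)) := by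
    rw [Z14, isingZ, isingZ, ← sum_factor14]
    exact Finset.sum_congr rfl fun p _ => key14 s t κ ρ β p.1 p.2
  have hN1 : (∑ στ : (V → Bool) × (V → Bool), spin (στ.1 a) * spin (στ.1 b) *
        Real.exp (-(β * H14 s t κ ρ στ.1 στ.2)))
      = (∑ σ : V → Bool, spin (σ a) * spin (σ b) *
          Real.exp ((β * (1 + ρ)) * ∑ e, κ e * spin (σ (s e)) * spin (σ (t e))))
        * isingZ s t κ (β * (1 - ρ)) := by
    rw [isingZ, ← sum_factor14]
    refine Finset.sum_congr rfl fun p _ => ?_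
    rw [key14]; ring
  have hN2 : (∑ στ : (V → Bool) × (V → Bool), spin (στ.2 a) * spin (στ.2 b) *
        Real.exp (-(β * H14 s t κ ρ στ.1 στ.2)))
      = (∑ σ : V → Bool, spin (σ a) * spin (σ b) *
          Real.exp ((β * (1 + ρ)) * ∑ e, κ e * spin (σ (s e)) * spin (σ (t e))))
        * (∑ τ : V → Bool, spin (τ a) * spin (τ b) *
          Real.exp ((β * (1 - ρ)) * ∑ e, κ e * spin (τ (s e)) * spin (τ (t e)))) := by
    rw [← sum_factor14]
    refine Finset.sum_congr rfl fun p _ => ?_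
    rw [key14, ← spin_mulConf_cancel p.1 p.2 a, ← spin_mulConf_cancel p.1 p.2 b]
    ring
  refine ⟨hZ, ?_, ?_⟩
  · rw [hN1, hZ, isingCorr, mul_div_mul_right _ _ hZm.ne']
  · rw [hN2, hZ, isingCorr, isingCorr, div_mul_div_comm]

end
end

section
/- In the ℤ₄×ℤ₂ model with Hamiltonian H = -(1/2) Σ_{e=ij} κ_e (ρ₊ + ρ₋ τᵢτⱼ)(ξᵢξⱼ + ηᵢηⱼ) on a finite graph (ξ, η, τ ∈ {-1,+1}^V, κ_e ≥ 0, ρ ∈ [0,1]), one has ⟨τ₀τ_R⟩ = ⟨τ₀τ_R ξ₀ξ_R η₀η_R⟩ for all sites 0, R. -/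
noncomputable section

variable {V E : Type*}

/-- Hamiltonian H = -(1/2) Σ_e κ_e (ρ₊ + ρ₋ τᵢτⱼ)(ξᵢξⱼ + ηᵢηⱼ) of the
ℤ₄×ℤ₂ model written via two Ising fields ξ, η coupled to τ. -/
def H4 [Fintype E] (s t : E → V) (κ : E → ℝ) (ρ : ℝ) (ξ η τ : V → Bool) : ℝ :=
  -(1 / 2) * ∑ e, κ e * ((1 + ρ) + (1 - ρ) * spin (τ (s e)) * spin (τ (t e)))
      * (spin (ξ (s e)) * spin (ξ (t e)) + spin (η (s e)) * spin (η (t e)))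

/-- Gibbs expectation of an observable f(ξ, η, τ) in the ℤ₄×ℤ₂ model. -/
def gibbs4 [Fintype V] [DecidableEq V] [Fintype E]
    (s t : E → V) (κ : E → ℝ) (ρ β : ℝ)
    (f : (V → Bool) → (V → Bool) → (V → Bool) → ℝ) : ℝ :=
  (∑ c : (V → Bool) × (V → Bool) × (V → Bool),
      f c.1 c.2.1 c.2.2 * Real.exp (-(β * H4 s t κ ρ c.1 c.2.1 c.2.2)))
    / ∑ c : (V → Bool) × (V → Bool) × (V → Bool),
        Real.exp (-(β * H4 s t κ ρ c.1 c.2.1 c.2.2))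

/-- The involution (ξ,η,τ) ↦ (ξ,η,τ·ξ·η). -/
def flip3 : ((V → Bool) × (V → Bool) × (V → Bool)) →
    ((V → Bool) × (V → Bool) × (V → Bool)) :=
  fun c => (c.1, c.2.1, fun v => c.2.2 v == (c.1 v == c.2.1 v))

lemma flip3_inv : Function.Involutive (flip3 (V := V)) := by
  intro c
  refine Prod.ext rfl (Prod.ext rfl ?_)
  funext v
  show ((c.2.2 v == (c.1 v == c.2.1 v)) == (c.1 v == c.2.1 v)) = c.2.2 v
  cases c.2.2 v <;> cases c.1 v <;> cases c.2.1 v <;> rfl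

lemma H4_flip [Fintype E] (s t : E → V) (κ : E → ℝ) (ρ : ℝ) (ξ η τ : V → Bool) :
    H4 s t κ ρ ξ η (fun v => τ v == (ξ v == η v)) = H4 s t κ ρ ξ η τ := by
  unfold H4
  congr 1
  apply Finset.sum_congr rfl
  intro e _
  simp only [spin_beq]
  cases ξ (s e) <;> cases ξ (t e) <;> cases η (s e) <;> cases η (t e) <;>
    cases τ (s e) <;> cases τ (t e) <;> simp [spin] <;> ring

/-- Invariance under τ ↦ τξη: ⟨τ₀τ_R⟩ = ⟨τ₀τ_R ξ₀ξ_R η₀η_R⟩. -/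
theorem stmt16 [Fintype V] [DecidableEq V] [Fintype E]
    (s t : E → V) (κ : E → ℝ) (hκ : ∀ e, 0 ≤ κ e)
    (ρ β : ℝ) (hρ0 : 0 ≤ ρ) (hρ1 : ρ ≤ 1) (a b : V) :
    gibbs4 s t κ ρ β (fun _ξ _η τ => spin (τ a) * spin (τ b))
      = gibbs4 s t κ ρ β (fun ξ η τ => spin (τ a) * spin (τ b)
          * (spin (ξ a) * spin (ξ b)) * (spin (η a) * spin (η b))) := by
  unfold gibbs4
  congr 1
  rw [← Function.Bijective.sum_comp (flip3_inv (V := V)).bijective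
    (fun c => spin (c.2.2 a) * spin (c.2.2 b)
      * (spin (c.1 a) * spin (c.1 b)) * (spin (c.2.1 a) * spin (c.2.1 b))
      * Real.exp (-(β * H4 s t κ ρ c.1 c.2.1 c.2.2)))]
  apply Finset.sum_congr rfl
  intro c _
  simp only [flip3, H4_flip, spin_beq]
  congr 1
  cases c.2.2 a <;> cases c.2.2 b <;> cases c.1 a <;> cases c.1 b <;>
    cases c.2.1 a <;> cases c.2.1 b <;> simp [spin] <;> ring

end
end

section
/- In the ℤ₄×ℤ₂ model with Hamiltonian H = -(1/2) Σ_{e=ij} κ_e (ρ₊ + ρ₋ τᵢτⱼ)(ξᵢξⱼ + ηᵢηⱼ) with κ_e ≥ 0, ρ ∈ [0,1], the conditional Gibbs expectation of ξ₀ξ_R given any fixed τ-configuration is nonnegative, and consequently ⟨τ₀τ_R ξ₀ξ_R⟩ ≤ ⟨ξ₀ξ_R⟩. -/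
noncomputable section

variable {V E : Type*}

lemma spin_true : spin true = 1 := rfl
lemma spin_false : spin false = -1 := rfl

lemma spin_cases (x : Bool) : spin x = 1 ∨ spin x = -1 := by cases x <;> simp [spin]

lemma spin_mul_le_one (x y : Bool) : spin x * spin y ≤ 1 := by
  rcases spin_cases x with h | h <;> rcases spin_cases y with h' | h' <;>
    rw [h, h'] <;> norm_num

lemma sum_spin_pow_nonneg (m : ℕ) : 0 ≤ ∑ x : Bool, spin x ^ m := by
  rw [Fintype.sum_bool, spin_true, spin_false, one_pow]
  rcases Nat.even_or_odd m with h | h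
  · rw [h.neg_one_pow]; norm_num
  · rw [h.neg_one_pow]; norm_num

lemma exp_pm (J x : ℝ) (hx : x = 1 ∨ x = -1) :
    Real.exp (J * x) = Real.cosh J + Real.sinh J * x := by
  rcases hx with h | h <;> subst h
  · rw [mul_one, mul_one, ← Real.cosh_add_sinh]
  · rw [mul_neg_one, mul_neg_one, ← Real.cosh_sub_sinh]; ring

lemma prod_ite_spin [Fintype V] [DecidableEq V] (ξ : V → Bool) (x : V) :
    ∏ v, spin (ξ v) ^ (if v = x then 1 else 0) = spin (ξ x) := by
  simp [pow_ite, Finset.prod_ite_eq']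

lemma prod_pow_mul_pair [Fintype V] [DecidableEq V] (ξ : V → Bool) (m : V → ℕ) (x y : V) :
    (∏ v, spin (ξ v) ^ m v) * (spin (ξ x) * spin (ξ y))
      = ∏ v, spin (ξ v) ^ (m v + ((if v = x then 1 else 0) + (if v = y then 1 else 0))) := by
  simp only [pow_add, Finset.prod_mul_distrib, prod_ite_spin]

lemma prod_pow_pair [Fintype V] [DecidableEq V] (ξ : V → Bool) (x y : V) :
    spin (ξ x) * spin (ξ y)
      = ∏ v, spin (ξ v) ^ ((if v = x then 1 else 0) + (if v = y then 1 else 0)) := by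
  have := prod_pow_mul_pair ξ (fun _ => 0) x y
  simpa using this

/-- Griffiths' first inequality for the Ising model with nonnegative couplings:
the un-normalized expectation of any spin monomial is nonnegative. -/
lemma griffiths1 [Fintype V] [DecidableEq V] (sE tE : E → V) (J : E → ℝ)
    (hJ : ∀ e, 0 ≤ J e) (A : Finset E) (m : V → ℕ) :
    0 ≤ ∑ ξ : V → Bool, (∏ v, spin (ξ v) ^ m v)
        * Real.exp (∑ e ∈ A, J e * (spin (ξ (sE e)) * spin (ξ (tE e)))) := by
  classical
  induction A using Finset.induction generalizing m with
  | empty =>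
      simp only [Finset.sum_empty, Real.exp_zero, mul_one]
      have : (∑ ξ : V → Bool, ∏ v, spin (ξ v) ^ m v)
          = ∏ v, ∑ x : Bool, spin x ^ m v := by
        rw [Finset.prod_univ_sum, Fintype.piFinset_univ]
      rw [this]
      exact Finset.prod_nonneg fun v _ => sum_spin_pow_nonneg (m v)
  | @insert e A he ih =>
      have key : ∀ ξ : V → Bool,
          (∏ v, spin (ξ v) ^ m v)
            * Real.exp (∑ e' ∈ insert e A, J e' * (spin (ξ (sE e')) * spin (ξ (tE e'))))
          = Real.cosh (J e) * ((∏ v, spin (ξ v) ^ m v)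
              * Real.exp (∑ e' ∈ A, J e' * (spin (ξ (sE e')) * spin (ξ (tE e')))))
            + Real.sinh (J e) * ((∏ v, spin (ξ v) ^ (m v + ((if v = sE e then 1 else 0) + (if v = tE e then 1 else 0))))
              * Real.exp (∑ e' ∈ A, J e' * (spin (ξ (sE e')) * spin (ξ (tE e'))))) := by
        intro ξ
        rw [Finset.sum_insert he, Real.exp_add,
          exp_pm (J e) _ (by rcases spin_cases (ξ (sE e)) with h | h <;>
            rcases spin_cases (ξ (tE e)) with h' | h' <;> rw [h, h'] <;> norm_num),
          ← prod_pow_mul_pair]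
        ring
      rw [Finset.sum_congr rfl fun ξ _ => key ξ, Finset.sum_add_distrib,
        ← Finset.mul_sum, ← Finset.mul_sum]
      have h1 := ih m
      have h2 := ih (fun v => m v + ((if v = sE e then 1 else 0) + (if v = tE e then 1 else 0)))
      exact add_nonneg (mul_nonneg (Real.cosh_pos _).le h1)
        (mul_nonneg (by simpa using Real.sinh_nonneg_iff.mpr (hJ e)) h2)

lemma griffiths_pair [Fintype V] [DecidableEq V] (sE tE : E → V) (J : E → ℝ)
    [Fintype E] (hJ : ∀ e, 0 ≤ J e) (a b : V) :
    0 ≤ ∑ ξ : V → Bool, spin (ξ a) * spin (ξ b)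
        * Real.exp (∑ e, J e * (spin (ξ (sE e)) * spin (ξ (tE e)))) := by
  have h := griffiths1 sE tE J hJ Finset.univ
    (fun v => (if v = a then 1 else 0) + (if v = b then 1 else 0))
  refine le_of_le_of_eq h (Finset.sum_congr rfl fun ξ _ => ?_)
  rw [← prod_pow_pair]

lemma H4_decomp [Fintype E] (s t : E → V) (κ : E → ℝ) (ρ β : ℝ) (ξ η τ : V → Bool) :
    -(β * H4 s t κ ρ ξ η τ)
      = (∑ e, (β / 2 * (κ e * ((1 + ρ) + (1 - ρ) * spin (τ (s e)) * spin (τ (t e)))))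
            * (spin (ξ (s e)) * spin (ξ (t e))))
        + ∑ e, (β / 2 * (κ e * ((1 + ρ) + (1 - ρ) * spin (τ (s e)) * spin (τ (t e)))))
            * (spin (η (s e)) * spin (η (t e))) := by
  unfold H4
  have h : ∀ S : ℝ, -(β * (-(1 / 2) * S)) = β / 2 * S := fun S => by ring
  rw [h, Finset.mul_sum, ← Finset.sum_add_distrib]
  exact Finset.sum_congr rfl fun e _ => by ring

lemma coup_nonneg [Fintype E] (s t : E → V) (κ : E → ℝ) (hκ : ∀ e, 0 ≤ κ e)
    (ρ β : ℝ) (hρ0 : 0 ≤ ρ) (hρ1 : ρ ≤ 1) (hβ : 0 ≤ β) (τ : V → Bool) (e : E) :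
    0 ≤ β / 2 * (κ e * ((1 + ρ) + (1 - ρ) * spin (τ (s e)) * spin (τ (t e)))) := by
  refine mul_nonneg (by positivity) (mul_nonneg (hκ e) ?_)
  rcases spin_cases (τ (s e)) with h | h <;> rcases spin_cases (τ (t e)) with h' | h' <;>
    rw [h, h'] <;> nlinarith

/-- The key un-normalized conditional correlation is nonnegative. -/
lemma inner_nonneg [Fintype V] [DecidableEq V] [Fintype E]
    (s t : E → V) (κ : E → ℝ) (hκ : ∀ e, 0 ≤ κ e)
    (ρ β : ℝ) (hρ0 : 0 ≤ ρ) (hρ1 : ρ ≤ 1) (hβ : 0 ≤ β) (a b : V) (τ : V → Bool) :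
    0 ≤ ∑ ξ : V → Bool, ∑ η : V → Bool,
        spin (ξ a) * spin (ξ b) * Real.exp (-(β * H4 s t κ ρ ξ η τ)) := by
  set J : E → ℝ :=
    fun e => β / 2 * (κ e * ((1 + ρ) + (1 - ρ) * spin (τ (s e)) * spin (τ (t e)))) with hJdef
  have hJ : ∀ e, 0 ≤ J e := fun e => coup_nonneg s t κ hκ ρ β hρ0 hρ1 hβ τ e
  have hsplit : ∀ ξ η : V → Bool,
      spin (ξ a) * spin (ξ b) * Real.exp (-(β * H4 s t κ ρ ξ η τ))
      = (spin (ξ a) * spin (ξ b)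
          * Real.exp (∑ e, J e * (spin (ξ (s e)) * spin (ξ (t e)))))
        * Real.exp (∑ e, J e * (spin (η (s e)) * spin (η (t e)))) := by
    intro ξ η
    rw [H4_decomp s t κ ρ β ξ η τ, Real.exp_add]
    ring
  calc (0:ℝ)
      ≤ (∑ ξ : V → Bool, spin (ξ a) * spin (ξ b)
            * Real.exp (∑ e, J e * (spin (ξ (s e)) * spin (ξ (t e)))))
          * ∑ η : V → Bool, Real.exp (∑ e, J e * (spin (η (s e)) * spin (η (t e)))) := by
        exact mul_nonneg (griffiths_pair s t J hJ a b)
          (Finset.sum_nonneg fun η _ => (Real.exp_pos _).le)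
    _ = ∑ ξ : V → Bool, ∑ η : V → Bool,
          spin (ξ a) * spin (ξ b) * Real.exp (-(β * H4 s t κ ρ ξ η τ)) := by
        rw [Finset.sum_mul]
        exact Finset.sum_congr rfl fun ξ _ => by
          rw [Finset.mul_sum]
          exact Finset.sum_congr rfl fun η _ => (hsplit ξ η).symm

lemma sum_reorder [Fintype V] [DecidableEq V] (F : (V → Bool) → (V → Bool) → (V → Bool) → ℝ) :
    ∑ c : (V → Bool) × (V → Bool) × (V → Bool), F c.1 c.2.1 c.2.2
      = ∑ τ : V → Bool, ∑ ξ : V → Bool, ∑ η : V → Bool, F ξ η τ := by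
  rw [Fintype.sum_prod_type]
  simp only [Fintype.sum_prod_type]
  calc (∑ ξ : V → Bool, ∑ η : V → Bool, ∑ τ : V → Bool, F ξ η τ)
      = ∑ ξ : V → Bool, ∑ τ : V → Bool, ∑ η : V → Bool, F ξ η τ :=
        Finset.sum_congr rfl fun ξ _ => Finset.sum_comm
    _ = ∑ τ : V → Bool, ∑ ξ : V → Bool, ∑ η : V → Bool, F ξ η τ :=
        Finset.sum_comm

/-- Conditional Gibbs expectation of ξ₀ξ_R given any fixed τ-configuration
is nonnegative (Griffiths), and consequently ⟨τ₀τ_R ξ₀ξ_R⟩ ≤ ⟨ξ₀ξ_R⟩. -/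
theorem stmt17 [Fintype V] [DecidableEq V] [Fintype E]
    (s t : E → V) (κ : E → ℝ) (hκ : ∀ e, 0 ≤ κ e)
    (ρ β : ℝ) (hρ0 : 0 ≤ ρ) (hρ1 : ρ ≤ 1) (hβ : 0 ≤ β) (a b : V) :
    (∀ τ : V → Bool,
      0 ≤ (∑ p : (V → Bool) × (V → Bool),
              spin (p.1 a) * spin (p.1 b) * Real.exp (-(β * H4 s t κ ρ p.1 p.2 τ)))
            / ∑ p : (V → Bool) × (V → Bool),
                Real.exp (-(β * H4 s t κ ρ p.1 p.2 τ))) ∧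
    gibbs4 s t κ ρ β (fun ξ _η τ => spin (τ a) * spin (τ b) * (spin (ξ a) * spin (ξ b)))
      ≤ gibbs4 s t κ ρ β (fun ξ _η _τ => spin (ξ a) * spin (ξ b)) := by
  constructor
  · intro τ
    refine div_nonneg ?_ (Finset.sum_nonneg fun p _ => (Real.exp_pos _).le)
    rw [Fintype.sum_prod_type]
    exact inner_nonneg s t κ hκ ρ β hρ0 hρ1 hβ a b τ
  · unfold gibbs4
    have hD : 0 < ∑ c : (V → Bool) × (V → Bool) × (V → Bool),
        Real.exp (-(β * H4 s t κ ρ c.1 c.2.1 c.2.2)) :=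
      Finset.sum_pos (fun c _ => Real.exp_pos _) Finset.univ_nonempty
    have hnum :
        (∑ c : (V → Bool) × (V → Bool) × (V → Bool),
            spin (c.2.2 a) * spin (c.2.2 b) * (spin (c.1 a) * spin (c.1 b))
              * Real.exp (-(β * H4 s t κ ρ c.1 c.2.1 c.2.2)))
        ≤ ∑ c : (V → Bool) × (V → Bool) × (V → Bool),
            spin (c.1 a) * spin (c.1 b) * Real.exp (-(β * H4 s t κ ρ c.1 c.2.1 c.2.2)) := by
      rw [sum_reorder (fun ξ η τ => spin (τ a) * spin (τ b) * (spin (ξ a) * spin (ξ b))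
            * Real.exp (-(β * H4 s t κ ρ ξ η τ))),
          sum_reorder (fun ξ η τ => spin (ξ a) * spin (ξ b)
            * Real.exp (-(β * H4 s t κ ρ ξ η τ)))]
      refine Finset.sum_le_sum fun τ _ => ?_
      have hfac :
          (∑ ξ : V → Bool, ∑ η : V → Bool, spin (τ a) * spin (τ b)
              * (spin (ξ a) * spin (ξ b)) * Real.exp (-(β * H4 s t κ ρ ξ η τ)))
          = spin (τ a) * spin (τ b) * ∑ ξ : V → Bool, ∑ η : V → Bool,
              spin (ξ a) * spin (ξ b) * Real.exp (-(β * H4 s t κ ρ ξ η τ)) := by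
        rw [Finset.mul_sum]
        refine Finset.sum_congr rfl fun ξ _ => ?_
        rw [Finset.mul_sum]
        exact Finset.sum_congr rfl fun η _ => by ring
      rw [hfac]
      exact mul_le_of_le_one_left (inner_nonneg s t κ hκ ρ β hρ0 hρ1 hβ a b τ)
        (spin_mul_le_one (τ a) (τ b))
    gcongr
end
end
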